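/- Let B and C be A-bounded linear operators on H (i.e., there exists λ > 0 with ‖Bx‖_A ≤ λ‖x‖_A and ‖Cx‖_A ≤ λ‖x‖_A for all x). Then for every α ∈ [0,1], (w_{A,e}(B,C))² ≤ (w_A(√α·B + √(1−α)·C))² + (w_A(√(1−α)·B − √α·C))². -/

import Mathlib

noncomputable section

open scoped ComplexInnerProductSpace

variable {H : Type*} [NormedAddCommGroup H] [InnerProductSpace ℂ H] [CompleteSpace H]

/-- The semi-inner product induced by a positive operator `A`:
`⟨x,y⟩_A = ⟨Ax,y⟩` (linear in the first argument, following the paper's convention). -/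
def innerA (A : H →L[ℂ] H) (x y : H) : ℂ := ⟪y, A x⟫

/-- The seminorm induced by `A`: `‖x‖_A = ⟨Ax,x⟩^{1/2}`. -/
def normA (A : H →L[ℂ] H) (x : H) : ℝ := Real.sqrt (innerA A x x).re

/-- The `A`-numerical radius `w_A(T) = sup { |⟨Tx,x⟩_A| : ‖x‖_A = 1 }`. -/
def wA (A T : H →L[ℂ] H) : ℝ :=
  sSup {r : ℝ | ∃ x : H, normA A x = 1 ∧ r = ‖innerA A (T x) x‖}

/-- The `A`-Crawford number `c_A(T) = inf { |⟨Tx,x⟩_A| : ‖x‖_A = 1 }`. -/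
def cA (A T : H →L[ℂ] H) : ℝ :=
  sInf {r : ℝ | ∃ x : H, normA A x = 1 ∧ r = ‖innerA A (T x) x‖}

/-- The `A`-operator seminorm `‖T‖_A = sup { ‖Tx‖_A : ‖x‖_A = 1 }`. -/
def opNormA (A T : H →L[ℂ] H) : ℝ :=
  sSup {r : ℝ | ∃ x : H, normA A x = 1 ∧ r = normA A (T x)}

/-- The `A`-Euclidean operator radius of the pair `(B, C)`. -/
def wAe (A B C : H →L[ℂ] H) : ℝ :=
  sSup {r : ℝ | ∃ x : H, normA A x = 1 ∧
    r = Real.sqrt ((‖innerA A (B x) x‖)^2 + (‖innerA A (C x) x‖)^2)}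

/-- The `A`-Euclidean operator seminorm of the pair `(B, C)`. -/
def normAe (A B C : H →L[ℂ] H) : ℝ :=
  sSup {r : ℝ | ∃ x : H, normA A x = 1 ∧
    r = Real.sqrt ((normA A (B x))^2 + (normA A (C x))^2)}

/-- `Re_A(T) = (T + T♯)/2`, where `Ts` is an `A`-adjoint of `T`. -/
def ReA (T Ts : H →L[ℂ] H) : H →L[ℂ] H := (2 : ℂ)⁻¹ • (T + Ts)

/-- `Im_A(T) = (T - T♯)/(2i)`, where `Ts` is an `A`-adjoint of `T`. -/
def ImA (T Ts : H →L[ℂ] H) : H →L[ℂ] H := (2 * Complex.I)⁻¹ • (T - Ts)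

lemma conj_symmA (A : H →L[ℂ] H) (hA : A.IsPositive) (x y : H) :
    (starRingEnd ℂ) ⟪y, A x⟫ = ⟪x, A y⟫ := by
  rw [inner_conj_symm]
  nth_rewrite 1 [← hA.isSelfAdjoint.adjoint_eq]
  exact ContinuousLinearMap.adjoint_inner_left A y x

/-- The semi-inner product of a positive operator as a `PreInnerProductSpace.Core`. -/
def coreA (A : H →L[ℂ] H) (hA : A.IsPositive) : PreInnerProductSpace.Core ℂ H where
  inner x y := ⟪x, A y⟫
  conj_inner_symm x y := conj_symmA A hA x y
  re_inner_nonneg x := by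
    have := hA.inner_nonneg_right x
    simpa using (Complex.le_def.mp this).1
  add_left x y z := by simp [inner_add_left]
  smul_left x y r := by simp [inner_smul_left, mul_comm]

lemma normA_nonneg (A : H →L[ℂ] H) (x : H) : 0 ≤ normA A x := Real.sqrt_nonneg _

/-- Cauchy–Schwarz for the semi-inner product. -/
lemma csA (A : H →L[ℂ] H) (hA : A.IsPositive) (x y : H) :
    ‖innerA A x y‖ ≤ normA A x * normA A y := by
  have h : ‖(⟪y, A x⟫ : ℂ)‖ * ‖(⟪x, A y⟫ : ℂ)‖ ≤ (⟪y, A y⟫:ℂ).re * (⟪x, A x⟫:ℂ).re :=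
    @InnerProductSpace.Core.inner_mul_inner_self_le ℂ H _ _ _ (coreA A hA) y x
  have hsymm : ‖(⟪x, A y⟫ : ℂ)‖ = ‖(⟪y, A x⟫ : ℂ)‖ := by
    rw [← conj_symmA A hA x y]; exact RCLike.norm_conj _
  have h' : ‖(⟪y, A x⟫ : ℂ)‖ ^ 2 ≤ (⟪x, A x⟫ : ℂ).re * (⟪y, A y⟫ : ℂ).re := by
    rw [hsymm, ← sq] at h; linarith
  have hx0 : 0 ≤ (⟪x, A x⟫ : ℂ).re := (coreA A hA).re_inner_nonneg x
  unfold normA innerA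
  rw [← Real.sqrt_mul hx0, ← Real.sqrt_sq (norm_nonneg _)]
  apply Real.sqrt_le_sqrt
  simpa using h'

lemma innerA_add_left (A : H →L[ℂ] H) (u v y : H) :
    innerA A (u + v) y = innerA A u y + innerA A v y := by
  simp [innerA, map_add, inner_add_right]

lemma innerA_sub_left (A : H →L[ℂ] H) (u v y : H) :
    innerA A (u - v) y = innerA A u y - innerA A v y := by
  simp [innerA, map_sub, inner_sub_right]

lemma innerA_smul_left (A : H →L[ℂ] H) (c : ℂ) (u y : H) :
    innerA A (c • u) y = c * innerA A u y := by
  simp [innerA, map_smul, inner_smul_right]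

lemma normA_smul_real (A : H →L[ℂ] H) (r : ℝ) (x : H) :
    normA A ((r : ℂ) • x) = |r| * normA A x := by
  have : innerA A ((r : ℂ) • x) ((r : ℂ) • x) = (r : ℂ)^2 * innerA A x x := by
    unfold innerA
    rw [map_smul, inner_smul_left, inner_smul_right, Complex.conj_ofReal]
    ring
  unfold normA
  rw [this]
  have : ((r : ℂ)^2 * innerA A x x).re = r^2 * (innerA A x x).re := by
    simp [Complex.ofReal_pow, Complex.mul_re]
    norm_num [pow_two]
  rw [this, Real.sqrt_mul (sq_nonneg r), Real.sqrt_sq_eq_abs]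

/-- Existence of an `A`-unit vector when `A` is a nonzero positive operator. -/
lemma exists_unitA (A : H →L[ℂ] H) (hA : A.IsPositive) (hA0 : A ≠ 0) :
    ∃ x : H, normA A x = 1 := by
  have hne : ∃ z : H, ⟪A z, z⟫ ≠ (0 : ℂ) := by
    by_contra h
    push_neg at h
    have : (A : H →ₗ[ℂ] H) = 0 := (inner_map_self_eq_zero (A : H →ₗ[ℂ] H)).mp h
    exact hA0 (by ext z; exact congrFun (congrArg DFunLike.coe this) z)
  obtain ⟨z, hz⟩ := hne
  have hre : 0 < (innerA A z z).re := by
    have h1 := (ContinuousLinearMap.isPositive_iff_complex A).mp hA z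
    have h2 : 0 ≤ (⟪A z, z⟫ : ℂ).re := by simpa using h1.2
    have h3 : (((⟪A z, z⟫ : ℂ).re : ℂ)) = ⟪A z, z⟫ := by simpa using h1.1
    have h4 : (innerA A z z).re = (⟪A z, z⟫ : ℂ).re := by
      rw [show innerA A z z = ⟪z, A z⟫ from rfl, ← inner_conj_symm (A z) z]
      exact Complex.conj_re _
    rcases lt_or_eq_of_le h2 with h | h
    · rw [h4]; exact h
    · exfalso; apply hz; rw [← h3, ← h]; simp
  have hpos : 0 < normA A z := Real.sqrt_pos.mpr hre
  refine ⟨(((normA A z)⁻¹ : ℝ) : ℂ) • z, ?_⟩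
  have := normA_smul_real A (normA A z)⁻¹ z
  rw [this, abs_of_pos (inv_pos.mpr hpos)]
  field_simp

/-- Rotation identity for complex numbers. -/
lemma rot_identity (s t : ℝ) (b c : ℂ) :
    (‖(s:ℂ) * b + (t:ℂ) * c‖)^2 + (‖(t:ℂ) * b - (s:ℂ) * c‖)^2
      = (s^2 + t^2) * ((‖b‖)^2 + (‖c‖)^2) := by
  simp only [Complex.sq_norm, Complex.normSq_apply, Complex.add_re, Complex.add_im,
    Complex.sub_re, Complex.sub_im, Complex.mul_re, Complex.mul_im,
    Complex.ofReal_re, Complex.ofReal_im]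
  ring

theorem stmt18 (A : H →L[ℂ] H) (hA : A.IsPositive) (hA0 : A ≠ 0)
    (B C : H →L[ℂ] H)
    (hBC : ∃ lam : ℝ, 0 < lam ∧ ∀ x : H,
      normA A (B x) ≤ lam * normA A x ∧ normA A (C x) ≤ lam * normA A x)
    (α : ℝ) (hα : α ∈ Set.Icc (0 : ℝ) 1) :
    (wAe A B C)^2
      ≤ (wA A (((Real.sqrt α : ℂ)) • B + ((Real.sqrt (1 - α) : ℂ)) • C))^2
          + (wA A (((Real.sqrt (1 - α) : ℂ)) • B - ((Real.sqrt α : ℂ)) • C))^2 := by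
  obtain ⟨lam, hlam, hb⟩ := hBC
  obtain ⟨x0, hx0⟩ := exists_unitA A hA hA0
  set s : ℝ := Real.sqrt α with hs
  set t : ℝ := Real.sqrt (1 - α) with ht
  have hs0 : 0 ≤ s := Real.sqrt_nonneg _
  have ht0 : 0 ≤ t := Real.sqrt_nonneg _
  have hs2 : s^2 = α := Real.sq_sqrt hα.1
  have ht2 : t^2 = 1 - α := Real.sq_sqrt (by linarith [hα.2])
  have hst : s^2 + t^2 = 1 := by rw [hs2, ht2]; ring
  have hs1 : s ≤ 1 := by nlinarith
  have ht1 : t ≤ 1 := by nlinarith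
  set T1 : H →L[ℂ] H := ((s : ℂ)) • B + ((t : ℂ)) • C with hT1
  set T2 : H →L[ℂ] H := ((t : ℂ)) • B - ((s : ℂ)) • C with hT2
  -- pointwise values
  have hval1 : ∀ x : H, innerA A (T1 x) x
      = (s : ℂ) * innerA A (B x) x + (t : ℂ) * innerA A (C x) x := by
    intro x
    rw [hT1]
    simp only [ContinuousLinearMap.add_apply, ContinuousLinearMap.smul_apply,
      innerA_add_left, innerA_smul_left]
  have hval2 : ∀ x : H, innerA A (T2 x) x
      = (t : ℂ) * innerA A (B x) x - (s : ℂ) * innerA A (C x) x := by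
    intro x
    rw [hT2]
    simp only [ContinuousLinearMap.sub_apply, ContinuousLinearMap.smul_apply,
      innerA_sub_left, innerA_smul_left]
  -- bounds on unit vectors
  have hBbound : ∀ x : H, normA A x = 1 → ‖innerA A (B x) x‖ ≤ lam := by
    intro x hx
    calc ‖innerA A (B x) x‖ ≤ normA A (B x) * normA A x := csA A hA (B x) x
    _ ≤ (lam * normA A x) * normA A x := by
        apply mul_le_mul_of_nonneg_right (hb x).1 (normA_nonneg A x)
    _ = lam := by rw [hx]; ring
  have hCbound : ∀ x : H, normA A x = 1 → ‖innerA A (C x) x‖ ≤ lam := by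
    intro x hx
    calc ‖innerA A (C x) x‖ ≤ normA A (C x) * normA A x := csA A hA (C x) x
    _ ≤ (lam * normA A x) * normA A x := by
        apply mul_le_mul_of_nonneg_right (hb x).2 (normA_nonneg A x)
    _ = lam := by rw [hx]; ring
  -- sets
  set S1 := {r : ℝ | ∃ x : H, normA A x = 1 ∧ r = ‖innerA A (T1 x) x‖} with hS1
  set S2 := {r : ℝ | ∃ x : H, normA A x = 1 ∧ r = ‖innerA A (T2 x) x‖} with hS2
  have hS1ne : S1.Nonempty := ⟨_, x0, hx0, rfl⟩
  have hS2ne : S2.Nonempty := ⟨_, x0, hx0, rfl⟩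
  have hS1bdd : BddAbove S1 := by
    refine ⟨2 * lam, ?_⟩
    rintro r ⟨x, hx, rfl⟩
    rw [hval1 x]
    calc ‖(s : ℂ) * innerA A (B x) x + (t : ℂ) * innerA A (C x) x‖
        ≤ ‖(s : ℂ) * innerA A (B x) x‖
          + ‖(t : ℂ) * innerA A (C x) x‖ := norm_add_le _ _
    _ = s * ‖innerA A (B x) x‖ + t * ‖innerA A (C x) x‖ := by
        simp [abs_of_nonneg hs0, abs_of_nonneg ht0]
    _ ≤ 1 * lam + 1 * lam := by
        have h1 := hBbound x hx; have h2 := hCbound x hx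
        have := norm_nonneg (innerA A (B x) x)
        have := norm_nonneg (innerA A (C x) x)
        nlinarith
    _ = 2 * lam := by ring
  have hS2bdd : BddAbove S2 := by
    refine ⟨2 * lam, ?_⟩
    rintro r ⟨x, hx, rfl⟩
    rw [hval2 x]
    calc ‖(t : ℂ) * innerA A (B x) x - (s : ℂ) * innerA A (C x) x‖
        ≤ ‖(t : ℂ) * innerA A (B x) x‖
          + ‖(s : ℂ) * innerA A (C x) x‖ := norm_sub_le _ _
    _ = t * ‖innerA A (B x) x‖ + s * ‖innerA A (C x) x‖ := by
        simp [abs_of_nonneg hs0, abs_of_nonneg ht0]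
    _ ≤ 1 * lam + 1 * lam := by
        have h1 := hBbound x hx; have h2 := hCbound x hx
        have := norm_nonneg (innerA A (B x) x)
        have := norm_nonneg (innerA A (C x) x)
        nlinarith
    _ = 2 * lam := by ring
  have hw1 : ∀ x : H, normA A x = 1 → ‖innerA A (T1 x) x‖ ≤ wA A T1 :=
    fun x hx => le_csSup hS1bdd ⟨x, hx, rfl⟩
  have hw2 : ∀ x : H, normA A x = 1 → ‖innerA A (T2 x) x‖ ≤ wA A T2 :=
    fun x hx => le_csSup hS2bdd ⟨x, hx, rfl⟩
  have hw1nn : 0 ≤ wA A T1 := le_trans (norm_nonneg _) (hw1 x0 hx0)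
  have hw2nn : 0 ≤ wA A T2 := le_trans (norm_nonneg _) (hw2 x0 hx0)
  -- the Euclidean radius set
  set SE := {r : ℝ | ∃ x : H, normA A x = 1 ∧
    r = Real.sqrt ((‖innerA A (B x) x‖)^2 + (‖innerA A (C x) x‖)^2)}
    with hSE
  have hSEne : SE.Nonempty := ⟨_, x0, hx0, rfl⟩
  have key : ∀ r ∈ SE, r ≤ Real.sqrt ((wA A T1)^2 + (wA A T2)^2) := by
    rintro r ⟨x, hx, rfl⟩
    apply Real.sqrt_le_sqrt
    set b := innerA A (B x) x
    set c := innerA A (C x) x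
    have hid : (‖(s:ℂ) * b + (t:ℂ) * c‖)^2
        + (‖(t:ℂ) * b - (s:ℂ) * c‖)^2
        = (‖b‖)^2 + (‖c‖)^2 := by
      rw [rot_identity s t b c, hst, one_mul]
    rw [← hid]
    have e1 : ‖(s:ℂ) * b + (t:ℂ) * c‖ ≤ wA A T1 := by
      have := hw1 x hx; rwa [hval1 x] at this
    have e2 : ‖(t:ℂ) * b - (s:ℂ) * c‖ ≤ wA A T2 := by
      have := hw2 x hx; rwa [hval2 x] at this
    have p1 : (‖(s:ℂ) * b + (t:ℂ) * c‖)^2 ≤ (wA A T1)^2 :=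
      pow_le_pow_left₀ (norm_nonneg _) e1 2
    have p2 : (‖(t:ℂ) * b - (s:ℂ) * c‖)^2 ≤ (wA A T2)^2 :=
      pow_le_pow_left₀ (norm_nonneg _) e2 2
    linarith
  have hwAe_le : wAe A B C ≤ Real.sqrt ((wA A T1)^2 + (wA A T2)^2) :=
    csSup_le hSEne key
  have hwAe_nn : 0 ≤ wAe A B C := by
    have hbdd : BddAbove SE := ⟨Real.sqrt ((wA A T1)^2 + (wA A T2)^2), fun r hr => key r hr⟩
    exact le_trans (Real.sqrt_nonneg _) (le_csSup hbdd ⟨x0, hx0, rfl⟩)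
  calc (wAe A B C)^2 ≤ (Real.sqrt ((wA A T1)^2 + (wA A T2)^2))^2 :=
        pow_le_pow_left₀ hwAe_nn hwAe_le 2
  _ = (wA A T1)^2 + (wA A T2)^2 := Real.sq_sqrt (by positivity)
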